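/- Let μ be a probability measure on ℝ, F its Borel transform, A ⊂ ℝ Borel, and for ν > 0 set I(Δ,ν) = ν ∫_Δ (Im F(E+iν))² dE and J(Δ,ν) = ∫_Δ ∫_ℝ ν²/(ν²+(x−y)²) dμ(y) dμ(x). Then there is a universal constant c > 0 such that I(A_δ, δ) ≥ c · J(A, δ), where A_δ is the δ-neighborhood of A. -/

import Mathlib

open MeasureTheory Set Function
open scoped ENNReal

namespace Stmt16Aux

variable {μ : Measure ℝ} {δ : ℝ}

/-- the Poisson kernel as an `ℝ≥0∞`-valued function -/
noncomputable def K (δ E x : ℝ) : ℝ≥0∞ := ENNReal.ofReal (δ / ((x - E) ^ 2 + δ ^ 2))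

/-- the Borel transform imaginary part, `ℝ≥0∞`-valued -/
noncomputable def g (μ : Measure ℝ) (δ E : ℝ) : ℝ≥0∞ := ∫⁻ x, K δ E x ∂μ

lemma measurable_uncurryK (hδ : 0 < δ) : Measurable (uncurry (K δ)) := by
  have hc : Continuous fun p : ℝ × ℝ => δ / ((p.2 - p.1) ^ 2 + δ ^ 2) := by
    apply Continuous.div continuous_const
      (((continuous_snd.sub continuous_fst).pow 2).add continuous_const)
    intro p; simp only [Pi.add_apply, Pi.pow_apply, Pi.sub_apply]; positivity
  exact ENNReal.continuous_ofReal.measurable.comp hc.measurable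

lemma measurable_K (hδ : 0 < δ) (E : ℝ) : Measurable (K δ E) := by
  have hc : Continuous fun x : ℝ => δ / ((x - E) ^ 2 + δ ^ 2) := by
    apply Continuous.div continuous_const
      (((continuous_id.sub continuous_const).pow 2).add continuous_const)
    intro x; simp only [Pi.add_apply, Pi.pow_apply, Pi.sub_apply]; positivity
  exact ENNReal.continuous_ofReal.measurable.comp hc.measurable

lemma measurable_g (hδ : 0 < δ) [SFinite μ] : Measurable (g μ δ) :=
  Measurable.lintegral_prod_right (measurable_uncurryK hδ)

lemma K_le (hδ : 0 < δ) (E x : ℝ) : K δ E x ≤ ENNReal.ofReal (1 / δ) := by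
  apply ENNReal.ofReal_le_ofReal
  rw [div_le_div_iff₀ (by positivity) hδ]
  nlinarith [sq_nonneg (x - E)]

lemma g_le (hδ : 0 < δ) [IsProbabilityMeasure μ] (E : ℝ) :
    g μ δ E ≤ ENNReal.ofReal (1 / δ) := by
  calc g μ δ E ≤ ∫⁻ _, ENNReal.ofReal (1 / δ) ∂μ := lintegral_mono (K_le hδ E)
    _ = ENNReal.ofReal (1 / δ) := by simp

lemma g_ne_top (hδ : 0 < δ) [IsProbabilityMeasure μ] (E : ℝ) : g μ δ E ≠ ∞ :=
  ((g_le hδ E).trans_lt ENNReal.ofReal_lt_top).ne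

/-- kernel comparison for nearby centers -/
lemma K_compare (hδ : 0 < δ) {x E : ℝ} (h : |x - E| ≤ δ) (y : ℝ) :
    K δ x y ≤ 3 * K δ E y := by
  have h2 : (x - E) ^ 2 ≤ δ ^ 2 := by
    have := abs_nonneg (x - E)
    nlinarith [sq_abs (x - E)]
  unfold K
  rw [show (3 : ℝ≥0∞) = ENNReal.ofReal (3 : ℝ) by norm_num,
    ← ENNReal.ofReal_mul (by norm_num)]
  apply ENNReal.ofReal_le_ofReal
  rw [mul_div_assoc', div_le_div_iff₀ (by positivity) (by positivity)]
  nlinarith [mul_nonneg hδ.le (sq_nonneg (y - 2 * x + E)), mul_nonneg hδ.le (sq_nonneg (y - x)),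
    mul_nonneg hδ.le (sub_nonneg.mpr h2)]

lemma g_compare (hδ : 0 < δ) [SFinite μ] {x E : ℝ} (h : |x - E| ≤ δ) :
    g μ δ x ≤ 3 * g μ δ E := by
  calc g μ δ x ≤ ∫⁻ y, 3 * K δ E y ∂μ := lintegral_mono (K_compare hδ h)
    _ = 3 * g μ δ E := lintegral_const_mul 3
        (measurable_K hδ E)

lemma one_le_K (hδ : 0 < δ) {E y : ℝ} (h : |y - E| < δ) :
    1 ≤ ENNReal.ofReal (2 * δ) * K δ E y := by
  unfold K
  rw [← ENNReal.ofReal_mul (by positivity), ← ENNReal.ofReal_one]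
  apply ENNReal.ofReal_le_ofReal
  rw [mul_div_assoc', le_div_iff₀ (by positivity)]
  have h2 : (y - E) ^ 2 ≤ δ ^ 2 := by
    have := abs_nonneg (y - E)
    nlinarith [sq_abs (y - E)]
  nlinarith

lemma measure_ball_le (hδ : 0 < δ) [IsProbabilityMeasure μ] (E : ℝ) :
    μ (Metric.ball E δ) ≤ ENNReal.ofReal (2 * δ) * g μ δ E := by
  have : μ (Metric.ball E δ) = ∫⁻ _ in Metric.ball E δ, 1 ∂μ := by simp
  rw [this]
  calc ∫⁻ _ in Metric.ball E δ, 1 ∂μ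
      ≤ ∫⁻ y in Metric.ball E δ, ENNReal.ofReal (2 * δ) * K δ E y ∂μ := by
        refine setLIntegral_mono (by
          exact measurable_const.mul
            (measurable_K hδ E)) ?_
        intro y hy
        exact one_le_K hδ (by simpa [Real.dist_eq] using (Metric.mem_ball.mp hy))
    _ ≤ ∫⁻ y, ENNReal.ofReal (2 * δ) * K δ E y ∂μ := setLIntegral_le_lintegral _ _
    _ = ENNReal.ofReal (2 * δ) * g μ δ E := lintegral_const_mul _
        (measurable_K hδ E)

/-- The key `lintegral` estimate. -/
lemma main_lintegral (hδ : 0 < δ) [IsProbabilityMeasure μ] {A : Set ℝ}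
    (hA : MeasurableSet A) :
    ∫⁻ x in A, g μ δ x ∂μ ≤ 3 * ∫⁻ E in Metric.thickening δ A, (g μ δ E) ^ 2 := by
  have hg := measurable_g (μ := μ) hδ
  have h2δ : (ENNReal.ofReal (2 * δ)) ≠ 0 := by
    simp [ENNReal.ofReal_eq_zero]; linarith
  have h2δ' : (ENNReal.ofReal (2 * δ)) ≠ ∞ := ENNReal.ofReal_ne_top
  rw [← ENNReal.mul_le_mul_iff_right h2δ h2δ' (b := _)]
  have stepA : ∀ x : ℝ, ENNReal.ofReal (2 * δ) * g μ δ x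
      ≤ 3 * ∫⁻ E in Metric.ball x δ, g μ δ E := by
    intro x
    have hvol : ENNReal.ofReal (2 * δ) * g μ δ x
        = ∫⁻ _ in Metric.ball x δ, g μ δ x := by
      rw [setLIntegral_const, Real.volume_ball, mul_comm]
    rw [hvol]
    calc ∫⁻ _ in Metric.ball x δ, g μ δ x
        ≤ ∫⁻ E in Metric.ball x δ, 3 * g μ δ E := by
          refine setLIntegral_mono (measurable_const.mul hg) ?_
          intro E hE
          refine g_compare hδ ?_
          have := Metric.mem_ball.mp hE
          rw [Real.dist_eq, abs_sub_comm] at this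
          linarith [this.le]
      _ = 3 * ∫⁻ E in Metric.ball x δ, g μ δ E := lintegral_const_mul _ hg
  have swap : ∫⁻ x in A, ∫⁻ E in Metric.ball x δ, g μ δ E ∂volume ∂μ
      = ∫⁻ E, g μ δ E * μ (Metric.ball E δ ∩ A) ∂volume := by
    have hmeas : AEMeasurable
        (uncurry fun x E => (Metric.ball x δ).indicator (g μ δ) E)
        ((μ.restrict A).prod volume) := by
      have hS : MeasurableSet {q : ℝ × ℝ | dist q.2 q.1 < δ} :=
        (isOpen_lt (continuous_snd.dist continuous_fst) continuous_const).measurableSet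
      have : (uncurry fun x E => (Metric.ball x δ).indicator (g μ δ) E)
          = Set.indicator {q : ℝ × ℝ | dist q.2 q.1 < δ} (fun q => g μ δ q.2) := by
        funext p
        show (Metric.ball p.1 δ).indicator (g μ δ) p.2 = _
        by_cases hp : p ∈ {q : ℝ × ℝ | dist q.2 q.1 < δ}
        · rw [Set.indicator_of_mem hp]
          exact Set.indicator_of_mem (Metric.mem_ball.mpr hp) _
        · rw [Set.indicator_of_notMem hp]
          exact Set.indicator_of_notMem (fun hc => hp (Metric.mem_ball.mp hc)) _
      rw [this]
      exact ((hg.comp measurable_snd).indicator hS).aemeasurable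
    calc ∫⁻ x in A, ∫⁻ E in Metric.ball x δ, g μ δ E ∂volume ∂μ
        = ∫⁻ x in A, ∫⁻ E, (Metric.ball x δ).indicator (g μ δ) E ∂volume ∂μ := by
          refine lintegral_congr fun x => ?_
          rw [lintegral_indicator Metric.isOpen_ball.measurableSet _]
      _ = ∫⁻ E, ∫⁻ x in A, (Metric.ball x δ).indicator (g μ δ) E ∂μ ∂volume :=
          lintegral_lintegral_swap hmeas
      _ = ∫⁻ E, g μ δ E * μ (Metric.ball E δ ∩ A) ∂volume := by
          refine lintegral_congr fun E => ?_
          have : ∀ x : ℝ, (Metric.ball x δ).indicator (g μ δ) E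
              = (Metric.ball E δ).indicator (fun _ => g μ δ E) x := by
            intro x
            by_cases hx : x ∈ Metric.ball E δ
            · rw [Set.indicator_of_mem hx, Set.indicator_of_mem
                (Metric.mem_ball.mpr (by rw [dist_comm]; exact Metric.mem_ball.mp hx))]
            · rw [Set.indicator_of_notMem hx, Set.indicator_of_notMem
                (fun hc => hx (Metric.mem_ball.mpr (by rw [dist_comm]; exact Metric.mem_ball.mp hc)))]
          simp_rw [this]
          rw [lintegral_indicator Metric.isOpen_ball.measurableSet _,
            setLIntegral_const, Measure.restrict_apply Metric.isOpen_ball.measurableSet]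
  have stepC : ∀ E : ℝ, g μ δ E * μ (Metric.ball E δ ∩ A)
      ≤ (Metric.thickening δ A).indicator
          (fun E => ENNReal.ofReal (2 * δ) * (g μ δ E) ^ 2) E := by
    intro E
    by_cases hE : E ∈ Metric.thickening δ A
    · rw [Set.indicator_of_mem hE]
      calc g μ δ E * μ (Metric.ball E δ ∩ A)
          ≤ g μ δ E * (ENNReal.ofReal (2 * δ) * g μ δ E) := by
            refine mul_le_mul_right ((measure_mono Set.inter_subset_left).trans ?_) _
            exact measure_ball_le hδ E
        _ = ENNReal.ofReal (2 * δ) * (g μ δ E) ^ 2 := by ring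
    · rw [Set.indicator_of_notMem hE]
      have hempty : Metric.ball E δ ∩ A = ∅ := by
        ext y
        simp only [Set.mem_inter_iff, Metric.mem_ball, Set.mem_empty_iff_false, iff_false]
        rintro ⟨hy1, hy2⟩
        exact hE (Metric.mem_thickening_iff.mpr ⟨y, hy2, by rwa [dist_comm]⟩)
      rw [hempty]; simp
  calc ENNReal.ofReal (2 * δ) * ∫⁻ x in A, g μ δ x ∂μ
      = ∫⁻ x in A, ENNReal.ofReal (2 * δ) * g μ δ x ∂μ :=
        (lintegral_const_mul _ hg).symm
    _ ≤ ∫⁻ x in A, 3 * ∫⁻ E in Metric.ball x δ, g μ δ E ∂volume ∂μ :=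
        lintegral_mono fun x => stepA x
    _ = 3 * ∫⁻ x in A, ∫⁻ E in Metric.ball x δ, g μ δ E ∂volume ∂μ := by
        refine lintegral_const_mul' _ _ (by norm_num)
    _ = 3 * ∫⁻ E, g μ δ E * μ (Metric.ball E δ ∩ A) ∂volume := by rw [swap]
    _ ≤ 3 * ∫⁻ E, (Metric.thickening δ A).indicator
          (fun E => ENNReal.ofReal (2 * δ) * (g μ δ E) ^ 2) E ∂volume := by
        exact mul_le_mul_right (lintegral_mono stepC) _
    _ = 3 * (ENNReal.ofReal (2 * δ) * ∫⁻ E in Metric.thickening δ A, (g μ δ E) ^ 2) := by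
        rw [lintegral_indicator Metric.isOpen_thickening.measurableSet _,
          lintegral_const_mul _ (hg.pow_const 2)]
    _ = ENNReal.ofReal (2 * δ) * (3 * ∫⁻ E in Metric.thickening δ A, (g μ δ E) ^ 2) := by
        ring

/-- The Poisson kernel integrates (in `E`) to `π`. -/
lemma poisson_lintegral (hδ : 0 < δ) (y : ℝ) :
    ∫⁻ E : ℝ, K δ E y = ENNReal.ofReal Real.pi := by
  have hfi : Integrable (fun u : ℝ => δ / (u ^ 2 + δ ^ 2)) := by
    have : (fun u : ℝ => δ / (u ^ 2 + δ ^ 2))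
        = fun u : ℝ => (1 / δ) * (1 + (u / δ) ^ 2)⁻¹ := by
      funext u
      rw [eq_comm, inv_eq_one_div, div_mul_div_comm, one_mul, div_eq_div_iff (by positivity)
        (by positivity)]
      field_simp
      ring
    rw [this]
    exact (integrable_inv_one_add_sq.comp_div hδ.ne').const_mul _
  have hval : ∫ u : ℝ, δ / (u ^ 2 + δ ^ 2) = Real.pi := by
    have : (fun u : ℝ => δ / (u ^ 2 + δ ^ 2))
        = fun u : ℝ => (1 / δ) * (1 + (u / δ) ^ 2)⁻¹ := by
      funext u
      rw [eq_comm, inv_eq_one_div, div_mul_div_comm, one_mul, div_eq_div_iff (by positivity)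
        (by positivity)]
      field_simp
      ring
    rw [this, integral_const_mul, MeasureTheory.Measure.integral_comp_div
      (fun v : ℝ => (1 + v ^ 2)⁻¹) δ, integral_univ_inv_one_add_sq, smul_eq_mul,
      abs_of_pos hδ]
    field_simp
  have hK : ∀ E : ℝ, K δ E y = ENNReal.ofReal ((fun u => δ / (u ^ 2 + δ ^ 2)) (E - y)) := by
    intro E
    unfold K
    congr 1
    ring_nf
  calc ∫⁻ E : ℝ, K δ E y
      = ∫⁻ E : ℝ, ENNReal.ofReal ((fun u => δ / (u ^ 2 + δ ^ 2)) (E - y)) :=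
        lintegral_congr hK
    _ = ENNReal.ofReal (∫ E : ℝ, (fun u => δ / (u ^ 2 + δ ^ 2)) (E - y)) := by
        rw [ofReal_integral_eq_lintegral_ofReal (hfi.comp_sub_right y)
          (Filter.Eventually.of_forall fun E => by positivity)]
    _ = ENNReal.ofReal Real.pi := by
        rw [integral_sub_right_eq_self (fun u : ℝ => δ / (u ^ 2 + δ ^ 2)) y, hval]

lemma lintegral_g (hδ : 0 < δ) [IsProbabilityMeasure μ] :
    ∫⁻ E : ℝ, g μ δ E = ENNReal.ofReal Real.pi := by
  have hswap : ∫⁻ E : ℝ, ∫⁻ x, K δ E x ∂μ = ∫⁻ x, ∫⁻ E : ℝ, K δ E x ∂volume ∂μ :=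
    lintegral_lintegral_swap (measurable_uncurryK hδ).aemeasurable
  unfold g
  rw [hswap]
  simp_rw [poisson_lintegral hδ]
  simp

lemma finite_sq (hδ : 0 < δ) [IsProbabilityMeasure μ] (S : Set ℝ) :
    ∫⁻ E in S, (g μ δ E) ^ 2 ≠ ∞ := by
  refine ne_of_lt (lt_of_le_of_lt ?_ (?_ : ENNReal.ofReal (1 / δ) * ENNReal.ofReal Real.pi < ∞))
  · calc ∫⁻ E in S, (g μ δ E) ^ 2 ≤ ∫⁻ E : ℝ, (g μ δ E) ^ 2 :=
        setLIntegral_le_lintegral _ _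
      _ ≤ ∫⁻ E : ℝ, ENNReal.ofReal (1 / δ) * g μ δ E := by
          refine lintegral_mono fun E => ?_
          rw [pow_two]
          exact mul_le_mul_left (g_le hδ E) _
      _ = ENNReal.ofReal (1 / δ) * ∫⁻ E : ℝ, g μ δ E :=
          lintegral_const_mul _ (measurable_g hδ)
      _ = ENNReal.ofReal (1 / δ) * ENNReal.ofReal Real.pi := by rw [lintegral_g hδ]
  · exact ENNReal.mul_lt_top ENNReal.ofReal_lt_top ENNReal.ofReal_lt_top

end Stmt16Aux

open Stmt16Aux

theorem stmt_16 :
    ∃ c : ℝ, 0 < c ∧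
      ∀ (μ : Measure ℝ), IsProbabilityMeasure μ →
        ∀ (A : Set ℝ), MeasurableSet A → ∀ δ : ℝ, 0 < δ →
          δ * (∫ E in Metric.thickening δ A, (∫ x, δ / ((x - E) ^ 2 + δ ^ 2) ∂μ) ^ 2) ≥
            c * ∫ x in A, (∫ y, δ ^ 2 / (δ ^ 2 + (x - y) ^ 2) ∂μ) ∂μ := by
  refine ⟨1/3, by norm_num, ?_⟩
  intro μ hμ A hA δ hδ
  have hg := measurable_g (μ := μ) hδ
  -- inner integral equals toReal of g
  have hinner : ∀ E : ℝ, ∫ x, δ / ((x - E) ^ 2 + δ ^ 2) ∂μ = (g μ δ E).toReal := by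
    intro E
    rw [integral_eq_lintegral_of_nonneg_ae
      (Filter.Eventually.of_forall fun x => by positivity)
      (by
        have hc : Continuous fun x : ℝ => δ / ((x - E) ^ 2 + δ ^ 2) := by
          apply Continuous.div continuous_const
            (((continuous_id.sub continuous_const).pow 2).add continuous_const)
          intro x; simp only [Pi.add_apply, Pi.pow_apply, Pi.sub_apply]; positivity
        exact hc.aestronglyMeasurable)]
    rfl
  -- J inner integral
  have hJinner : ∀ x : ℝ, ∫ y, δ ^ 2 / (δ ^ 2 + (x - y) ^ 2) ∂μ = δ * (g μ δ x).toReal := by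
    intro x
    have : ∀ y : ℝ, δ ^ 2 / (δ ^ 2 + (x - y) ^ 2) = δ * (δ / ((y - x) ^ 2 + δ ^ 2)) := by
      intro y
      rw [mul_div_assoc', div_eq_div_iff (by positivity) (by positivity)]
      ring
    simp_rw [this]
    rw [integral_const_mul, hinner x]
  -- rewrite LHS
  have hLHS : ∫ E in Metric.thickening δ A, (∫ x, δ / ((x - E) ^ 2 + δ ^ 2) ∂μ) ^ 2
      = (∫⁻ E in Metric.thickening δ A, (g μ δ E) ^ 2).toReal := by
    rw [← integral_toReal ((hg.pow_const 2).aemeasurable)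
      (Filter.Eventually.of_forall fun E =>
        (ENNReal.pow_lt_top (lt_of_le_of_lt (g_le hδ E) ENNReal.ofReal_lt_top)))]
    refine setIntegral_congr_fun Metric.isOpen_thickening.measurableSet fun E _ => ?_
    rw [hinner E, ENNReal.toReal_pow]
  -- rewrite RHS
  have hAg : ∫⁻ x in A, g μ δ x ∂μ ≠ ∞ := by
    refine ne_of_lt (lt_of_le_of_lt ?_ (ENNReal.ofReal_lt_top (r := 1 / δ)))
    calc ∫⁻ x in A, g μ δ x ∂μ ≤ ∫⁻ x in A, ENNReal.ofReal (1 / δ) ∂μ :=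
        lintegral_mono fun x => g_le hδ x
      _ = ENNReal.ofReal (1 / δ) * μ A := setLIntegral_const _ _
      _ ≤ ENNReal.ofReal (1 / δ) * 1 := mul_le_mul_right prob_le_one _
      _ = ENNReal.ofReal (1 / δ) := mul_one _
  have hRHS : ∫ x in A, (∫ y, δ ^ 2 / (δ ^ 2 + (x - y) ^ 2) ∂μ) ∂μ
      = δ * (∫⁻ x in A, g μ δ x ∂μ).toReal := by
    rw [show (∫ x in A, (∫ y, δ ^ 2 / (δ ^ 2 + (x - y) ^ 2) ∂μ) ∂μ)
        = ∫ x in A, δ * (g μ δ x).toReal ∂μ from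
      setIntegral_congr_fun hA fun x _ => hJinner x]
    rw [integral_const_mul, integral_toReal (hg.aemeasurable)
      (Filter.Eventually.of_forall fun x =>
        lt_of_le_of_lt (g_le hδ x) ENNReal.ofReal_lt_top)]
  rw [hLHS, hRHS]
  -- key estimate in real numbers
  have key := main_lintegral (μ := μ) hδ hA
  have hfin : (3 : ℝ≥0∞) * ∫⁻ E in Metric.thickening δ A, (g μ δ E) ^ 2 ≠ ∞ :=
    ENNReal.mul_ne_top (by norm_num) (finite_sq hδ _)
  have key' : (∫⁻ x in A, g μ δ x ∂μ).toReal
      ≤ 3 * (∫⁻ E in Metric.thickening δ A, (g μ δ E) ^ 2).toReal := by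
    have := ENNReal.toReal_mono hfin key
    rwa [ENNReal.toReal_mul, ENNReal.toReal_ofNat] at this
  have h1 : (0:ℝ) ≤ (∫⁻ E in Metric.thickening δ A, (g μ δ E) ^ 2).toReal :=
    ENNReal.toReal_nonneg
  nlinarith [hδ.le, ENNReal.toReal_nonneg (a := ∫⁻ x in A, g μ δ x ∂μ)]
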